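/- Two sequences i, j ∈ Seq(ν) lie in the same connected component of the weight graph G_ν if and only if conf(i) = conf(j); moreover i ↦ T^i and T ↦ i^T are mutually inverse bijections between standard λ-tableaux and sequences i with conf(i) = λ. -/

import Mathlib

namespace KLRPaper

/-- The height at which a bead dropped on runner `j` comes to rest, given the
beads already placed (gravity: it rests one above the highest bead on the same
or an adjacent runner). -/
def heightIn (acc : List (ℤ × ℕ)) (j : ℤ) : ℕ :=
  (acc.filterMap fun p =>
    if (p.1 - j).natAbs ≤ 1 then some (p.2 + 1) else none).foldr max 0

/-- Drop the beads of the sequence one by one onto the abacus, recording the cell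
(runner, height) of each bead in order. -/
def cellsAux : List (ℤ × ℕ) → List ℤ → List (ℤ × ℕ)
  | acc, [] => acc
  | acc, j :: rest => cellsAux (acc ++ [(j, heightIn acc j)]) rest

/-- The list of cells of the beads of the sequence `l`, in the order in which
they are dropped; this is the standard `λ`-tableau `T^l`. -/
def cells (l : List ℤ) : List (ℤ × ℕ) := cellsAux [] l

/-- The configuration `conf(l)` of the sequence `l`: the (unlabelled) set of
occupied cells of the bead-and-runner diagram. -/
def conf (l : List ℤ) : Multiset (ℤ × ℕ) := (cells l : Multiset (ℤ × ℕ))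

/-- An admissible transposition: swap two neighbouring entries of the sequence
whose runners are distinct and non-adjacent (`i_r · i_{r+1} = 0`); this is the
edge relation of the weight graph `G_ν`. -/
def AdmSwap (l l' : List ℤ) : Prop :=
  ∃ r, r + 1 < l.length ∧ 2 ≤ (l.getD r 0 - l.getD (r + 1) 0).natAbs ∧
    l' = (l.set r (l.getD (r + 1) 0)).set (r + 1) (l.getD r 0)

/-- A standard `λ`-tableau for the configuration `c`: a numbering of the beads of
`c` (a list of cells) such that beads may be placed in increasing order of their
labels, each coming to rest in its own cell. -/
def IsStandardTableau (c : Multiset (ℤ × ℕ)) (t : List (ℤ × ℕ)) : Prop :=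
  (t : Multiset (ℤ × ℕ)) = c ∧ t = cells (t.map Prod.fst)

/- ### Auxiliary lemmas -/

private lemma natAbs_comm (a b : ℤ) : (a - b).natAbs = (b - a).natAbs := by
  rw [← Int.natAbs_neg, neg_sub]

private lemma le_foldr_max {a : ℕ} : ∀ {L : List ℕ}, a ∈ L → a ≤ L.foldr max 0
  | b :: L, h => by
    rcases List.mem_cons.1 h with rfl | h
    · exact le_max_left _ _
    · exact le_trans (le_foldr_max h) (le_max_right _ _)

lemma heightIn_perm {acc acc' : List (ℤ × ℕ)} (h : acc.Perm acc') (j : ℤ) :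
    heightIn acc j = heightIn acc' j := by
  unfold heightIn
  exact (h.filterMap _).foldr_eq 0

lemma heightIn_append_far {acc : List (ℤ × ℕ)} {b j : ℤ} {hb : ℕ}
    (hfar : ¬ (b - j).natAbs ≤ 1) :
    heightIn (acc ++ [(b, hb)]) j = heightIn acc j := by
  unfold heightIn
  rw [List.filterMap_append]
  simp [hfar]

lemma succ_le_heightIn_of_mem {acc : List (ℤ × ℕ)} {a j : ℤ} {ha : ℕ}
    (hmem : (a, ha) ∈ acc) (hadj : (a - j).natAbs ≤ 1) :
    ha + 1 ≤ heightIn acc j := by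
  apply le_foldr_max
  exact List.mem_filterMap.2 ⟨(a, ha), hmem, by simp [hadj]⟩

lemma cellsAux_append : ∀ (l1 : List ℤ) (acc : List (ℤ × ℕ)) (l2 : List ℤ),
    cellsAux acc (l1 ++ l2) = cellsAux (cellsAux acc l1) l2
  | [], acc, l2 => rfl
  | j :: l1, acc, l2 => by
    simp only [List.cons_append, cellsAux]
    exact cellsAux_append l1 _ l2

lemma mem_cellsAux : ∀ (l : List ℤ) (acc : List (ℤ × ℕ)) (x : ℤ × ℕ),
    x ∈ acc → x ∈ cellsAux acc l
  | [], _, _, h => h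
  | j :: l, acc, x, h => mem_cellsAux l _ x (List.mem_append_left _ h)

lemma cellsAux_perm : ∀ (l : List ℤ) {acc acc' : List (ℤ × ℕ)},
    acc.Perm acc' → (cellsAux acc l).Perm (cellsAux acc' l)
  | [], _, _, h => h
  | j :: l, acc, acc', h => by
    simp only [cellsAux, heightIn_perm h j]
    exact cellsAux_perm l (h.append_right _)

lemma map_fst_cellsAux : ∀ (l : List ℤ) (acc : List (ℤ × ℕ)),
    (cellsAux acc l).map Prod.fst = acc.map Prod.fst ++ l
  | [], acc => by simp [cellsAux]
  | j :: l, acc => by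
    rw [cellsAux, map_fst_cellsAux l]
    simp

lemma map_fst_cells (l : List ℤ) : (cells l).map Prod.fst = l := by
  simpa [cells] using map_fst_cellsAux l []

lemma cellsAux_swap {a b : ℤ} (hfar : 2 ≤ (a - b).natAbs) (acc : List (ℤ × ℕ))
    (t : List ℤ) :
    (cellsAux acc (a :: b :: t)).Perm (cellsAux acc (b :: a :: t)) := by
  have hab : ¬ (a - b).natAbs ≤ 1 := by omega
  have hba : ¬ (b - a).natAbs ≤ 1 := by rw [natAbs_comm]; omega
  simp only [cellsAux]
  rw [heightIn_append_far hab, heightIn_append_far hba]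
  apply cellsAux_perm
  rw [List.append_assoc, List.append_assoc]
  exact List.Perm.append_left acc (by constructor)

lemma swap_decomp : ∀ (l : List ℤ) (r : ℕ), r + 1 < l.length →
    l = l.take r ++ l.getD r 0 :: l.getD (r + 1) 0 :: l.drop (r + 2) ∧
    (l.set r (l.getD (r + 1) 0)).set (r + 1) (l.getD r 0)
      = l.take r ++ l.getD (r + 1) 0 :: l.getD r 0 :: l.drop (r + 2)
  | [], r, h => by simp at h
  | [a], r, h => by simp at h
  | a :: b :: t, 0, _ => by simp [List.set]
  | a :: b :: t, r + 1, h => by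
    have h' : r + 1 < (b :: t).length := by simpa using h
    obtain ⟨h1, h2⟩ := swap_decomp (b :: t) r h'
    refine ⟨?_, ?_⟩
    · simpa using congrArg (a :: ·) h1
    · simpa [List.set] using congrArg (a :: ·) h2

lemma admSwap_of_decomp : ∀ (p : List ℤ) {a b : ℤ} {t : List ℤ},
    2 ≤ (a - b).natAbs → AdmSwap (p ++ a :: b :: t) (p ++ b :: a :: t)
  | [], a, b, t, h => ⟨0, by simp, by simpa using h, by simp [List.set]⟩
  | x :: p, a, b, t, h => by
    obtain ⟨r, h1, h2, h3⟩ := admSwap_of_decomp p h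
    exact ⟨r + 1, by simpa using h1, by simpa using h2,
      by simpa [List.set] using congrArg (x :: ·) h3⟩

lemma admSwap_iff {l l' : List ℤ} : AdmSwap l l' ↔
    ∃ p a b t, 2 ≤ (a - b).natAbs ∧ l = p ++ a :: b :: t ∧ l' = p ++ b :: a :: t := by
  constructor
  · rintro ⟨r, hr, hfar, rfl⟩
    obtain ⟨h1, h2⟩ := swap_decomp l r hr
    exact ⟨l.take r, l.getD r 0, l.getD (r + 1) 0, l.drop (r + 2), hfar, h1, h2⟩
  · rintro ⟨p, a, b, t, hfar, rfl, rfl⟩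
    exact admSwap_of_decomp p hfar

lemma admSwap_symm : Symmetric AdmSwap := by
  rintro l l' h
  obtain ⟨p, a, b, t, hfar, rfl, rfl⟩ := admSwap_iff.1 h
  exact admSwap_iff.2 ⟨p, b, a, t, by rw [natAbs_comm]; exact hfar, rfl, rfl⟩

lemma conf_eq_of_admSwap {l l' : List ℤ} (h : AdmSwap l l') : conf l = conf l' := by
  obtain ⟨p, a, b, t, hfar, rfl, rfl⟩ := admSwap_iff.1 h
  rw [conf, conf, Multiset.coe_eq_coe, cells, cells, cellsAux_append, cellsAux_append]
  exact cellsAux_swap hfar _ t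

lemma conf_eq_of_rtg {l l' : List ℤ} (h : Relation.ReflTransGen AdmSwap l l') :
    conf l = conf l' := by
  induction h with
  | refl => rfl
  | tail _ h2 ih => exact ih.trans (conf_eq_of_admSwap h2)

lemma admSwap_append {l l' : List ℤ} (x : ℤ) (h : AdmSwap l l') :
    AdmSwap (l ++ [x]) (l' ++ [x]) := by
  obtain ⟨p, a, b, t, hfar, rfl, rfl⟩ := admSwap_iff.1 h
  refine admSwap_iff.2 ⟨p, a, b, t ++ [x], hfar, by simp, by simp⟩

lemma exists_split {j : ℤ} {h : ℕ} : ∀ {m : List ℤ}, (j, h) ∈ cells m →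
    ∃ p s, m = p ++ j :: s ∧ heightIn (cells p) j = h := by
  intro m
  induction m using List.reverseRecOn with
  | nil => intro hmem; simp [cells, cellsAux] at hmem
  | append_singleton q k ih =>
    intro hmem
    rw [cells, cellsAux_append] at hmem
    simp only [cellsAux] at hmem
    rcases List.mem_append.1 hmem with hmem | hmem
    · obtain ⟨p, s, rfl, hh⟩ := ih hmem
      exact ⟨p, s ++ [k], by simp, hh⟩
    · simp only [List.mem_singleton, Prod.mk.injEq] at hmem
      obtain ⟨rfl, hh⟩ := hmem
      exact ⟨q, [], rfl, hh.symm⟩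

lemma far_of_top {j : ℤ} {h : ℕ} : ∀ (s : List ℤ) (acc : List (ℤ × ℕ)),
    (j, h) ∈ acc →
    (∀ x ∈ cellsAux acc s, (x.1 - j).natAbs ≤ 1 → x.2 ≤ h) →
    ∀ k ∈ s, 2 ≤ (k - j).natAbs
  | [], _, _, _ => by simp
  | k :: s, acc, hmem, htop => by
    have hknew : (k, heightIn acc k) ∈ cellsAux acc (k :: s) := by
      rw [cellsAux]; exact mem_cellsAux _ _ _ (by simp)
    have hfar : 2 ≤ (k - j).natAbs := by
      by_contra hadj
      push_neg at hadj
      have h1 : h + 1 ≤ heightIn acc k :=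
        succ_le_heightIn_of_mem hmem (by rw [natAbs_comm]; omega)
      have h2 : heightIn acc k ≤ h := htop _ hknew (by omega)
      omega
    intro k' hk'
    rcases List.mem_cons.1 hk' with rfl | hk'
    · exact hfar
    · exact far_of_top s (acc ++ [(k, heightIn acc k)])
        (List.mem_append_left _ hmem) (by rw [← cellsAux]; exact htop) k' hk'

lemma move_to_end {j : ℤ} : ∀ (s p : List ℤ),
    (∀ k ∈ s, 2 ≤ (k - j).natAbs) →
    Relation.ReflTransGen AdmSwap (p ++ j :: s) ((p ++ s) ++ [j])
  | [], p, _ => by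
    rw [List.append_nil]
  | k :: s, p, hfar => by
    have h1 : AdmSwap (p ++ j :: k :: s) (p ++ k :: j :: s) :=
      admSwap_of_decomp p (by rw [natAbs_comm]; exact hfar k (by simp))
    have h2 := move_to_end s (p ++ [k]) (fun k' hk' => hfar k' (by simp [hk']))
    refine Relation.ReflTransGen.head h1 ?_
    simpa [List.append_assoc] using h2

lemma cells_concat (l : List ℤ) (j : ℤ) :
    cells (l ++ [j]) = cells l ++ [(j, heightIn (cells l) j)] := by
  rw [cells, cellsAux_append]; rfl

lemma top_of_concat {l₀ : List ℤ} {j : ℤ} :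
    ∀ x ∈ cells (l₀ ++ [j]), (x.1 - j).natAbs ≤ 1 →
      x.2 ≤ heightIn (cells l₀) j := by
  intro x hx hadj
  rw [cells_concat] at hx
  rcases List.mem_append.1 hx with hx | hx
  · obtain ⟨a, ha⟩ := x
    have := succ_le_heightIn_of_mem hx hadj
    omega
  · simp only [List.mem_singleton] at hx
    rw [hx]

lemma rtg_of_conf_eq : ∀ (n : ℕ) (l l' : List ℤ), l.length ≤ n →
    conf l = conf l' → Relation.ReflTransGen AdmSwap l l' := by
  intro n
  induction n with
  | zero =>
    intro l l' hlen hconf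
    have hl : l = [] := List.eq_nil_of_length_eq_zero (by omega)
    subst hl
    have hp : (cells ([] : List ℤ)).Perm (cells l') := Multiset.coe_eq_coe.1 hconf
    have : cells l' = [] := hp.symm.eq_nil
    have hl' : l' = [] := by rw [← map_fst_cells l', this]; rfl
    rw [hl']
  | succ n ih =>
    intro l l' hlen hconf
    rcases l.eq_nil_or_concat with rfl | ⟨l₀, j, rfl⟩
    · have hp : (cells ([] : List ℤ)).Perm (cells l') := Multiset.coe_eq_coe.1 hconf
      have : cells l' = [] := hp.symm.eq_nil
      have hl' : l' = [] := by rw [← map_fst_cells l', this]; rfl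
      rw [hl']
    rw [List.concat_eq_append] at *
    set h := heightIn (cells l₀) j with hh_def
    have hperm : (cells (l₀ ++ [j])).Perm (cells l') := Multiset.coe_eq_coe.1 hconf
    have hmem : (j, h) ∈ cells l' := by
      refine hperm.subset ?_
      rw [cells_concat]; simp [hh_def]
    obtain ⟨p, s, rfl, hh⟩ := exists_split hmem
    have htopl : ∀ x ∈ cells (l₀ ++ [j]), (x.1 - j).natAbs ≤ 1 → x.2 ≤ h :=
      top_of_concat
    have htop' : ∀ x ∈ cells (p ++ j :: s), (x.1 - j).natAbs ≤ 1 → x.2 ≤ h :=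
      fun x hx => htopl x (hperm.symm.subset hx)
    have hc2 : cells (p ++ j :: s) = cellsAux (cells p ++ [(j, h)]) s := by
      rw [cells, cellsAux_append]
      show cellsAux (cellsAux (cells p) [j]) s = _
      rw [show cellsAux (cells p) [j] = cells p ++ [(j, heightIn (cells p) j)] from rfl, hh]
    have hsfar : ∀ k ∈ s, 2 ≤ (k - j).natAbs :=
      far_of_top (j := j) (h := h) s (cells p ++ [(j, h)]) (by simp)
        (by rw [← hc2]; exact htop')
    have hmv : Relation.ReflTransGen AdmSwap (p ++ j :: s) ((p ++ s) ++ [j]) :=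
      move_to_end s p hsfar
    set q := p ++ s with hq_def
    have hconf2 : conf (l₀ ++ [j]) = conf (q ++ [j]) :=
      hconf.trans (conf_eq_of_rtg hmv)
    set h'' := heightIn (cells q) j with hh''_def
    have hperm2 : (cells (l₀ ++ [j])).Perm (cells (q ++ [j])) :=
      Multiset.coe_eq_coe.1 hconf2
    have hmem1 : (j, h'') ∈ cells (l₀ ++ [j]) := by
      refine hperm2.symm.subset ?_
      rw [cells_concat]; simp [hh''_def]
    have hmem2 : (j, h) ∈ cells (q ++ [j]) := by
      refine hperm2.subset ?_
      rw [cells_concat]; simp [hh_def]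
    have hle1 : h'' ≤ h := htopl _ hmem1 (by simp)
    have hle2 : h ≤ h'' := top_of_concat _ hmem2 (by simp)
    have hhh : h = h'' := le_antisymm hle2 hle1
    have hcancel : conf l₀ = conf q := by
      have := hconf2
      rw [conf, conf, cells_concat, cells_concat, ← hh_def, ← hh''_def, ← hhh] at this
      rw [← Multiset.coe_add, ← Multiset.coe_add] at this
      exact add_right_cancel this
    have hlen0 : l₀.length ≤ n := by
      rw [List.length_append] at hlen; simpa using hlen
    have rtg1 := ih l₀ q hlen0 hcancel
    have rtg1' : Relation.ReflTransGen AdmSwap (l₀ ++ [j]) (q ++ [j]) :=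
      Relation.ReflTransGen.lift (· ++ [j]) (fun a b hab => admSwap_append j hab) _ _ rtg1
    exact rtg1'.trans ((@Relation.ReflTransGen.symmetric _ _ ⟨fun _ _ h => admSwap_symm h⟩).symm _ _ hmv)

/-- Kleshchev–Ram. -/
theorem weight_graph_components_and_tableaux :
    (∀ l l' : List ℤ, Relation.ReflTransGen AdmSwap l l' ↔ conf l = conf l') ∧
    (∀ l : List ℤ, IsStandardTableau (conf l) (cells l) ∧
      (cells l).map Prod.fst = l) ∧
    (∀ (c : Multiset (ℤ × ℕ)) (t : List (ℤ × ℕ)), IsStandardTableau c t →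
      conf (t.map Prod.fst) = c ∧ cells (t.map Prod.fst) = t) := by
  refine ⟨fun l l' => ⟨conf_eq_of_rtg, rtg_of_conf_eq l.length l l' le_rfl⟩, ?_, ?_⟩
  · intro l
    refine ⟨⟨rfl, ?_⟩, map_fst_cells l⟩
    rw [map_fst_cells]
  · rintro c t ⟨h1, h2⟩
    exact ⟨by rw [conf, ← h2, h1], h2.symm⟩

end KLRPaper
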